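/- Let n ≥ 3 and let Δ be a triangulation of [n]. The assignments t_{ij} ↦ t_{ij} for (i,j) ∈ Δ define a group homomorphism ĵ_Δ: 𝕋_Δ → 𝕋_n, and there exists a surjective group homomorphism π_Δ: 𝕋_n → 𝕋_Δ such that π_Δ ∘ ĵ_Δ is the identity of 𝕋_Δ. In particular, ĵ_Δ is an injective homomorphism 𝕋_Δ → 𝕋_n. -/

import Mathlib

open scoped Classical

noncomputable section

namespace NCPolygon

/-- Cyclic successor on `Fin n` (the vertices of the `n`-gon in cyclic order). -/
def csucc {n : ℕ} (i : Fin n) : Fin n :=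
  ⟨(i.1 + 1) % n, Nat.mod_lt _ (Nat.lt_of_le_of_lt (Nat.zero_le _) i.isLt)⟩

/-- Cyclic predecessor on `Fin n`. -/
def cpred {n : ℕ} (i : Fin n) : Fin n :=
  ⟨(i.1 + (n - 1)) % n, Nat.mod_lt _ (Nat.lt_of_le_of_lt (Nat.zero_le _) i.isLt)⟩

/-- A list of elements of `Fin n` is *cyclic* if its entries are distinct and some
cyclic rotation of it is strictly increasing. -/
def IsCyclicSeq {n : ℕ} (l : List (Fin n)) : Prop :=
  l.Nodup ∧ ∃ k : ℕ, (l.rotate k).Pairwise (· < ·)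

/-- The pair `(i,k)` crosses `(j,l)` iff `(i,j,k,l)` is cyclic. -/
def Crosses {n : ℕ} (p q : Fin n × Fin n) : Prop :=
  IsCyclicSeq [p.1, q.1, p.2, q.2]

def NonCrossing {n : ℕ} (Δ : Set (Fin n × Fin n)) : Prop :=
  (∀ p ∈ Δ, p.1 ≠ p.2) ∧ ∀ p ∈ Δ, ∀ q ∈ Δ, ¬ Crosses p q

/-- A triangulation of the `n`-gon: a maximal crossing-free set of (directed) chords. -/
def IsTriangulation {n : ℕ} (Δ : Set (Fin n × Fin n)) : Prop :=
  NonCrossing Δ ∧ ∀ Δ' : Set (Fin n × Fin n), NonCrossing Δ' → Δ ⊆ Δ' → Δ' = Δ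

/-! ### The noncommutative polygon algebra `𝒜_n` -/

abbrev OffD (n : ℕ) := {p : Fin n × Fin n // p.1 ≠ p.2}

abbrev AGen (n : ℕ) := OffD n ⊕ OffD n

def xF {n : ℕ} (i j : Fin n) : FreeAlgebra ℚ (AGen n) :=
  if h : i ≠ j then FreeAlgebra.ι ℚ (Sum.inl ⟨(i, j), h⟩) else 1

def xiF {n : ℕ} (i j : Fin n) : FreeAlgebra ℚ (AGen n) :=
  if h : i ≠ j then FreeAlgebra.ι ℚ (Sum.inr ⟨(i, j), h⟩) else 1

/-- The defining relations of `𝒜_n`: invertibility, triangle, and exchange relations. -/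
inductive ARel (n : ℕ) : FreeAlgebra ℚ (AGen n) → FreeAlgebra ℚ (AGen n) → Prop
  | mul_inv {i j : Fin n} (h : i ≠ j) : ARel n (xF i j * xiF i j) 1
  | inv_mul {i j : Fin n} (h : i ≠ j) : ARel n (xiF i j * xF i j) 1
  | triangle {i j k : Fin n} (hij : i ≠ j) (hik : i ≠ k) (hjk : j ≠ k) :
      ARel n (xF i j * xiF k j * xF k i) (xF i k * xiF j k * xF j i)
  | exchange {i j k l : Fin n} (h : IsCyclicSeq [i, j, k, l]) :
      ARel n (xF j l) (xF j k * xiF i k * xF i l + xF j i * xiF k i * xF k l)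

/-- The noncommutative `n`-gon algebra `𝒜_n`. -/
abbrev NCPoly (n : ℕ) := RingQuot (ARel n)

/-- The generator `x_{ij} ∈ 𝒜_n` (junk value `1` when `i = j`). -/
def X {n : ℕ} (i j : Fin n) : NCPoly n :=
  RingQuot.mkAlgHom ℚ (ARel n) (xF i j)

/-- The generator `x_{ij}⁻¹ ∈ 𝒜_n`. -/
def Xinv {n : ℕ} (i j : Fin n) : NCPoly n :=
  RingQuot.mkAlgHom ℚ (ARel n) (xiF i j)

/-- The noncommutative angle `T_i^{jk} = x_{ji}⁻¹ x_{jk} x_{ik}⁻¹ ∈ 𝒜_n`. -/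
def Tang {n : ℕ} (i j k : Fin n) : NCPoly n := Xinv j i * X j k * Xinv i k

/-! ### Triangle groups -/

def tF {n : ℕ} (Δ : Set (Fin n × Fin n)) (i j : Fin n) : FreeGroup Δ :=
  if h : (i, j) ∈ Δ then FreeGroup.of (⟨(i, j), h⟩ : Δ) else 1

/-- The triangle relations of the triangle group `𝕋_Δ`. -/
def triRels {n : ℕ} (Δ : Set (Fin n × Fin n)) : Set (FreeGroup Δ) :=
  { w | ∃ i j k : Fin n, i ≠ j ∧ i ≠ k ∧ j ≠ k ∧
      (i, j) ∈ Δ ∧ (j, i) ∈ Δ ∧ (i, k) ∈ Δ ∧ (k, i) ∈ Δ ∧ (j, k) ∈ Δ ∧ (k, j) ∈ Δ ∧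
      w = tF Δ i j * (tF Δ k j)⁻¹ * tF Δ k i *
        (tF Δ i k * (tF Δ j k)⁻¹ * tF Δ j i)⁻¹ }

/-- The triangle group `𝕋_Δ` of a triangulation `Δ`. -/
abbrev TriGroup {n : ℕ} (Δ : Set (Fin n × Fin n)) := PresentedGroup (triRels Δ)

/-- The generator `t_{ij} ∈ 𝕋_Δ` (junk value `1` when `(i,j) ∉ Δ`). -/
def tG {n : ℕ} (Δ : Set (Fin n × Fin n)) (i j : Fin n) : TriGroup Δ :=
  if h : (i, j) ∈ Δ then PresentedGroup.of (rels := triRels Δ) ⟨(i, j), h⟩ else 1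

/-! ### The big triangle group `𝕋_n` -/

def btF {n : ℕ} (i j : Fin n) : FreeGroup (OffD n) :=
  if h : i ≠ j then FreeGroup.of (⟨(i, j), h⟩ : OffD n) else 1

def bigRels (n : ℕ) : Set (FreeGroup (OffD n)) :=
  { w | ∃ i j k : Fin n, i ≠ j ∧ i ≠ k ∧ j ≠ k ∧
      w = btF i j * (btF k j)⁻¹ * btF k i * (btF i k * (btF j k)⁻¹ * btF j i)⁻¹ }

/-- The big triangle group `𝕋_n`. -/
abbrev BigTriGroup (n : ℕ) := PresentedGroup (bigRels n)

/-- The generator `t_{ij} ∈ 𝕋_n`. -/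
def bigT {n : ℕ} (i j : Fin n) : BigTriGroup n :=
  if h : i ≠ j then PresentedGroup.of (rels := bigRels n) ⟨(i, j), h⟩ else 1

/-! ### Distinguished subalgebras and subgroups -/

/-- `𝒜_Δ`: the subalgebra of `𝒜_n` generated by all `x_{ij}` together with the
`x_{ij}⁻¹` for `(i,j) ∈ Δ`. -/
def ADelta (n : ℕ) (Δ : Set (Fin n × Fin n)) : Subalgebra ℚ (NCPoly n) :=
  Algebra.adjoin ℚ
    ({a | ∃ i j : Fin n, i ≠ j ∧ a = X i j} ∪ {a | ∃ p ∈ Δ, a = Xinv p.1 p.2})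

/-- `𝒬_n`: the subalgebra of `𝒜_n` generated by the `y_{ij}^k = x_{ki}⁻¹ x_{kj}`. -/
def Qn (n : ℕ) : Subalgebra ℚ (NCPoly n) :=
  Algebra.adjoin ℚ
    {a : NCPoly n | ∃ i j k : Fin n, i ≠ j ∧ i ≠ k ∧ j ≠ k ∧ a = Xinv k i * X k j}

/-- `𝕌_Δ`: the subgroup of `𝕋_Δ` generated by the `u_{ij}^k = t_{ki}⁻¹ t_{kj}`. -/
def UDelta {n : ℕ} (Δ : Set (Fin n × Fin n)) : Subgroup (TriGroup Δ) :=
  Subgroup.closure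
    {g | ∃ i j k : Fin n, (k, i) ∈ Δ ∧ (k, j) ∈ Δ ∧ g = (tG Δ k i)⁻¹ * tG Δ k j}


/-! ### Auxiliary development for the proof -/










/-! ### position coordinates -/

def pos {n : ℕ} (a x : Fin n) : ℕ :=
  if a.val ≤ x.val then x.val - a.val else x.val + n - a.val

variable {n : ℕ}

lemma pos_cases (a x : Fin n) :
    (a.val ≤ x.val ∧ pos a x = x.val - a.val) ∨
    (x.val < a.val ∧ pos a x = x.val + n - a.val) := by
  unfold pos; split_ifs with h
  · exact Or.inl ⟨h, rfl⟩
  · exact Or.inr ⟨by omega, rfl⟩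

lemma pos_lt (a x : Fin n) : pos a x < n := by
  have h1 := a.isLt; have h2 := x.isLt
  rcases pos_cases a x with ⟨h, e⟩ | ⟨h, e⟩ <;> omega

lemma pos_self (a : Fin n) : pos a a = 0 := by
  rcases pos_cases a a with ⟨h, e⟩ | ⟨h, e⟩ <;> omega

lemma pos_eq_zero {a x : Fin n} (h : pos a x = 0) : x = a := by
  have h1 := a.isLt; have h2 := x.isLt
  apply Fin.ext
  rcases pos_cases a x with ⟨h', e⟩ | ⟨h', e⟩ <;> omega

lemma pos_pos {a x : Fin n} (h : x ≠ a) : 0 < pos a x := by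
  rcases Nat.eq_zero_or_pos (pos a x) with h0 | h0
  · exact absurd (pos_eq_zero h0) h
  · exact h0

lemma pos_inj {a x y : Fin n} (h : pos a x = pos a y) : x = y := by
  have h1 := a.isLt; have h2 := x.isLt; have h3 := y.isLt
  apply Fin.ext
  rcases pos_cases a x with ⟨hx, ex⟩ | ⟨hx, ex⟩ <;>
    rcases pos_cases a y with ⟨hy, ey⟩ | ⟨hy, ey⟩ <;> omega

/-- shift of base point -/
lemma pos_shift_cases (i a z : Fin n) :
    (pos i a ≤ pos i z ∧ pos a z = pos i z - pos i a) ∨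
    (pos i z < pos i a ∧ pos a z = pos i z + n - pos i a) := by
  have h1 := i.isLt; have h2 := a.isLt; have h3 := z.isLt
  rcases pos_cases i a with ⟨ha, ea⟩ | ⟨ha, ea⟩ <;>
    rcases pos_cases i z with ⟨hz, ez⟩ | ⟨hz, ez⟩ <;>
      rcases pos_cases a z with ⟨haz, eaz⟩ | ⟨haz, eaz⟩ <;> omega

/-! ### the 4-point cyclicity bridge -/

lemma rot1 (a x b y : Fin n) : ([a,x,b,y] : List (Fin n)).rotate 1 = [x,b,y,a] := by
  simp [List.rotate_eq_drop_append_take (show 1 ≤ ([a,x,b,y]:List (Fin n)).length by norm_num)]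

lemma rot2 (a x b y : Fin n) : ([a,x,b,y] : List (Fin n)).rotate 2 = [b,y,a,x] := by
  simp [List.rotate_eq_drop_append_take (show 2 ≤ ([a,x,b,y]:List (Fin n)).length by norm_num)]

lemma rot3 (a x b y : Fin n) : ([a,x,b,y] : List (Fin n)).rotate 3 = [y,a,x,b] := by
  simp [List.rotate_eq_drop_append_take (show 3 ≤ ([a,x,b,y]:List (Fin n)).length by norm_num)]

lemma cyc_bridge (a x b y : Fin n) :
    IsCyclicSeq [a, x, b, y] ↔
      0 < pos a x ∧ pos a x < pos a b ∧ pos a b < pos a y := by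
  have hA := a.isLt; have hX := x.isLt; have hB := b.isLt; have hY := y.isLt
  have hax := pos_cases a x; have hab := pos_cases a b; have hay := pos_cases a y
  constructor
  · rintro ⟨hnd, k, hs⟩
    simp [List.nodup_cons] at hnd
    rw [← List.rotate_mod] at hs
    have hm : k % ([a,x,b,y] : List (Fin n)).length < 4 := Nat.mod_lt _ (by norm_num)
    set m := k % ([a,x,b,y] : List (Fin n)).length with hmdef
    interval_cases m
    · rw [List.rotate_zero] at hs
      simp [List.pairwise_cons] at hs; omega
    · rw [rot1] at hs
      simp [List.pairwise_cons] at hs; omega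
    · rw [rot2] at hs
      simp [List.pairwise_cons] at hs; omega
    · rw [rot3] at hs
      simp [List.pairwise_cons] at hs; omega
  · rintro ⟨h1, h2, h3⟩
    constructor
    · simp [List.nodup_cons]; omega
    · rcases le_or_gt a.val x.val with c1 | c1 <;>
        rcases le_or_gt a.val b.val with c2 | c2 <;>
          rcases le_or_gt a.val y.val with c3 | c3
      · exact ⟨0, by rw [List.rotate_zero]; simp [List.pairwise_cons]; omega⟩
      · exact ⟨3, by rw [rot3]; simp [List.pairwise_cons]; omega⟩
      · exact ⟨0, by omega⟩
      · exact ⟨2, by rw [rot2]; simp [List.pairwise_cons]; omega⟩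
      · exact ⟨0, by omega⟩
      · exact ⟨0, by omega⟩
      · exact ⟨0, by omega⟩
      · exact ⟨1, by rw [rot1]; simp [List.pairwise_cons]; omega⟩

/-- cyclic-order predicate on four position values -/
def CR (A X B Y : ℕ) : Prop :=
  (A < X ∧ X < B ∧ B < Y) ∨ (X < B ∧ B < Y ∧ Y < A) ∨
  (B < Y ∧ Y < A ∧ A < X) ∨ (Y < A ∧ A < X ∧ X < B)

lemma cyc4 (i a x b y : Fin n) :
    IsCyclicSeq [a, x, b, y] ↔ CR (pos i a) (pos i x) (pos i b) (pos i y) := by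
  rw [cyc_bridge]
  have hA := pos_lt i a; have hX := pos_lt i x; have hB := pos_lt i b; have hY := pos_lt i y
  have sx := pos_shift_cases i a x
  have sb := pos_shift_cases i a b
  have sy := pos_shift_cases i a y
  unfold CR
  omega

lemma crosses_iff (i : Fin n) (a b x y : Fin n) :
    Crosses (a, b) (x, y) ↔ CR (pos i a) (pos i x) (pos i b) (pos i y) :=
  cyc4 i a x b y







variable {Δ : Set (Fin n × Fin n)}

lemma mem_ne (hΔ : IsTriangulation Δ) {a b : Fin n} (h : (a,b) ∈ Δ) : a ≠ b :=
  hΔ.1.1 _ h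

lemma no_cross (hΔ : IsTriangulation Δ) {p q : Fin n × Fin n} (hp : p ∈ Δ) (hq : q ∈ Δ) :
    ¬ Crosses p q := hΔ.1.2 p hp q hq

lemma mem_of_max (hΔ : IsTriangulation Δ) (e : Fin n × Fin n) (hne : e.1 ≠ e.2)
    (h : ∀ q ∈ Δ, ¬ Crosses e q ∧ ¬ Crosses q e) (hself : ¬ Crosses e e) : e ∈ Δ := by
  have heq : insert e Δ = Δ := by
    refine hΔ.2 _ ⟨?_, ?_⟩ (Set.subset_insert e Δ)
    · rintro p (rfl | hp)
      · exact hne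
      · exact hΔ.1.1 _ hp
    · rintro p (rfl | hp) q (rfl | hq)
      · exact hself
      · exact (h q hq).1
      · exact (h p hp).2
      · exact hΔ.1.2 p hp q hq
  rw [← heq]; exact Set.mem_insert e Δ

lemma swap_mem (hΔ : IsTriangulation Δ) {a b : Fin n} (h : (a,b) ∈ Δ) : (b,a) ∈ Δ := by
  have hne : a ≠ b := mem_ne hΔ h
  refine mem_of_max hΔ (b,a) (Ne.symm hne) ?_ ?_
  · rintro ⟨x,y⟩ hq
    have h1 := no_cross hΔ (p := (a,b)) (q := (x,y)) h hq
    have h2 := no_cross hΔ (p := (x,y)) (q := (a,b)) hq h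
    rw [crosses_iff a] at h1 h2
    constructor
    · rw [crosses_iff a]
      simp only [CR, pos_self] at h1 h2 ⊢
      omega
    · rw [crosses_iff a]
      simp only [CR, pos_self] at h1 h2 ⊢
      omega
  · rw [crosses_iff a]
    simp only [CR, pos_self]
    omega

/-! ### boundary edges -/

lemma val_csucc (i : Fin n) : (csucc i).val = if i.val + 1 = n then 0 else i.val + 1 := by
  have hi := i.isLt
  show (i.val + 1) % n = _
  split_ifs with h
  · rw [h, Nat.mod_self]
  · exact Nat.mod_eq_of_lt (by omega)

lemma val_cpred (i : Fin n) : (cpred i).val = if i.val = 0 then n - 1 else i.val - 1 := by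
  have hi := i.isLt
  show (i.val + (n-1)) % n = _
  split_ifs with h
  · rw [h, Nat.zero_add]
    exact Nat.mod_eq_of_lt (by omega)
  · rw [Nat.mod_eq_sub_mod (by omega), show i.val + (n-1) - n = i.val - 1 by omega]
    exact Nat.mod_eq_of_lt (by omega)

lemma pos_csucc (hn : 2 ≤ n) (i : Fin n) : pos i (csucc i) = 1 := by
  have hi := i.isLt
  have h := val_csucc i
  rcases pos_cases i (csucc i) with ⟨h', e⟩ | ⟨h', e⟩ <;> split_ifs at h <;> omega

lemma pos_cpred (hn : 2 ≤ n) (i : Fin n) : pos i (cpred i) = n - 1 := by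
  have hi := i.isLt
  have h := val_cpred i
  rcases pos_cases i (cpred i) with ⟨h', e⟩ | ⟨h', e⟩ <;> split_ifs at h <;> omega

lemma csucc_cpred (hn : 2 ≤ n) (i : Fin n) : csucc (cpred i) = i := by
  have hi := i.isLt
  have h1 := val_cpred i
  have h2 := val_csucc (cpred i)
  apply Fin.ext
  split_ifs at h1 h2 <;> omega

lemma edge_mem (hΔ : IsTriangulation Δ) (hn : 2 ≤ n) (i : Fin n) : (i, csucc i) ∈ Δ := by
  have h1 : pos i (csucc i) = 1 := pos_csucc hn i
  refine mem_of_max hΔ (i, csucc i) ?_ ?_ ?_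
  · intro h
    have h' : i = csucc i := h
    rw [← h', pos_self] at h1; omega
  · rintro ⟨x,y⟩ hq
    constructor
    · rw [crosses_iff i]; simp only [CR, pos_self, h1]; omega
    · rw [crosses_iff i]; simp only [CR, pos_self, h1]; omega
  · rw [crosses_iff i]; simp only [CR, pos_self, h1]; omega

lemma edge_mem' (hΔ : IsTriangulation Δ) (hn : 2 ≤ n) (i : Fin n) : (i, cpred i) ∈ Δ := by
  have h := edge_mem hΔ hn (cpred i)
  rw [csucc_cpred hn] at h
  exact swap_mem hΔ h

/-! ### fans -/

def FanSpec (Δ : Set (Fin n × Fin n)) (i j u v : Fin n) : Prop :=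
  (i,u) ∈ Δ ∧ (i,v) ∈ Δ ∧ (u,v) ∈ Δ ∧
  0 < pos i u ∧ pos i u < pos i j ∧ pos i j < pos i v ∧
  ∀ x : Fin n, (i,x) ∈ Δ → pos i x ≤ pos i u ∨ pos i v ≤ pos i x

lemma pos_j_large (hΔ : IsTriangulation Δ) (hn : 3 ≤ n) {i j : Fin n}
    (hij : i ≠ j) (hnot : (i,j) ∉ Δ) : 2 ≤ pos i j ∧ pos i j ≤ n - 2 := by
  have h0 : 0 < pos i j := pos_pos (Ne.symm hij)
  have hlt : pos i j < n := pos_lt i j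
  have h1 : pos i j ≠ 1 := by
    intro h
    have hj : j = csucc i := pos_inj (a := i) (by rw [h, pos_csucc (by omega) i])
    rw [hj] at hnot
    exact hnot (edge_mem hΔ (by omega) i)
  have h2 : pos i j ≠ n - 1 := by
    intro h
    have hj : j = cpred i := pos_inj (a := i) (by rw [h, pos_cpred (by omega) i])
    rw [hj] at hnot
    exact hnot (edge_mem' hΔ (by omega) i)
  omega

lemma fan_exists (hΔ : IsTriangulation Δ) (hn : 3 ≤ n) {i j : Fin n}
    (hij : i ≠ j) (hnot : (i,j) ∉ Δ) : ∃ u v, FanSpec Δ i j u v := by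
  obtain ⟨hj2, hjn2⟩ := pos_j_large hΔ hn hij hnot
  have hjlt : pos i j < n := pos_lt i j
  set S : Finset (Fin n) := Finset.univ.filter (fun x => (i,x) ∈ Δ ∧ pos i x < pos i j) with hS
  have hSne : S.Nonempty := by
    refine ⟨csucc i, ?_⟩
    simp only [hS, Finset.mem_filter, Finset.mem_univ, true_and]
    exact ⟨edge_mem hΔ (by omega) i, by rw [pos_csucc (by omega) i]; omega⟩
  obtain ⟨u, huS, humax⟩ := S.exists_max_image (pos i) hSne
  set T : Finset (Fin n) := Finset.univ.filter (fun x => (i,x) ∈ Δ ∧ pos i j < pos i x) with hT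
  have hTne : T.Nonempty := by
    refine ⟨cpred i, ?_⟩
    simp only [hT, Finset.mem_filter, Finset.mem_univ, true_and]
    exact ⟨edge_mem' hΔ (by omega) i, by rw [pos_cpred (by omega) i]; omega⟩
  obtain ⟨v, hvT, hvmin⟩ := T.exists_min_image (pos i) hTne
  simp only [hS, Finset.mem_filter, Finset.mem_univ, true_and] at huS
  simp only [hT, Finset.mem_filter, Finset.mem_univ, true_and] at hvT
  obtain ⟨hu_mem, hu_lt⟩ := huS
  obtain ⟨hv_mem, hv_gt⟩ := hvT
  have hu0 : 0 < pos i u := pos_pos (Ne.symm (mem_ne hΔ hu_mem))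
  have zone : ∀ x : Fin n, (i,x) ∈ Δ → pos i x ≤ pos i u ∨ pos i v ≤ pos i x := by
    intro x hx
    rcases lt_trichotomy (pos i x) (pos i j) with hc | hc | hc
    · left
      exact humax x (by simp only [hS, Finset.mem_filter, Finset.mem_univ, true_and]; exact ⟨hx, hc⟩)
    · exfalso
      have hx' : x = j := pos_inj (a := i) hc
      rw [hx'] at hx
      exact hnot hx
    · right
      exact hvmin x (by simp only [hT, Finset.mem_filter, Finset.mem_univ, true_and]; exact ⟨hx, hc⟩)
  have hins : ∀ x y : Fin n, (x,y) ∈ Δ →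
      ¬(pos i u < pos i x ∧ pos i x < pos i v ∧ (pos i y < pos i u ∨ pos i v < pos i y)) := by
    intro x y hxy hcon
    by_cases hyi : y = i
    · have hix : (i,x) ∈ Δ := swap_mem hΔ (hyi ▸ hxy)
      have hz := zone x hix
      omega
    · have hy0 : 0 < pos i y := pos_pos hyi
      have hyx : (y,x) ∈ Δ := swap_mem hΔ hxy
      have f1 := no_cross hΔ (p := (i,u)) (q := (y,x)) hu_mem hyx
      have f2 := no_cross hΔ (p := (i,v)) (q := (x,y)) hv_mem hxy
      rw [crosses_iff i] at f1 f2
      simp only [CR, pos_self] at f1 f2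
      omega
  have huv : (u,v) ∈ Δ := by
    refine mem_of_max hΔ (u,v) ?_ ?_ ?_
    · intro h
      have h' : u = v := h
      rw [h'] at hu_lt; omega
    · rintro ⟨x,y⟩ hq
      have i1 := hins x y hq
      have i2 := hins y x (swap_mem hΔ hq)
      constructor
      · rw [crosses_iff i]; simp only [CR]; omega
      · rw [crosses_iff i]; simp only [CR]; omega
    · rw [crosses_iff i]; simp only [CR]; omega
  exact ⟨u, v, hu_mem, hv_mem, huv, hu0, hu_lt, hv_gt, zone⟩

lemma fan_unique {i j u v u' v' : Fin n} (h1 : FanSpec Δ i j u v) (h2 : FanSpec Δ i j u' v') :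
    u = u' ∧ v = v' := by
  obtain ⟨hu1, hv1, _, hp1, hq1, hr1, z1⟩ := h1
  obtain ⟨hu2, hv2, _, hp2, hq2, hr2, z2⟩ := h2
  have a1 := z1 u' hu2
  have a2 := z2 u hu1
  have b1 := z1 v' hv2
  have b2 := z2 v hv1
  constructor
  · exact pos_inj (a := i) (by omega)
  · exact pos_inj (a := i) (by omega)

lemma fan_transfer {i j k u v : Fin n} (h : FanSpec Δ i j u v)
    (h1 : pos i u < pos i k) (h2 : pos i k < pos i v) : FanSpec Δ i k u v := by
  obtain ⟨hu, hv, huv, hp, _, _, z⟩ := h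
  exact ⟨hu, hv, huv, hp, h1, h2, z⟩

lemma fan_not_mem {i j k u v : Fin n} (h : FanSpec Δ i j u v)
    (h1 : pos i u < pos i k) (h2 : pos i k < pos i v) : (i,k) ∉ Δ := by
  intro hk
  have := h.2.2.2.2.2.2 k hk
  omega

/-! ### crossing number -/

def nuSet (Δ : Set (Fin n × Fin n)) (a b : Fin n) : Set (Fin n × Fin n) :=
  {p | p ∈ Δ ∧ (Crosses (a,b) (p.1, p.2) ∨ Crosses (a,b) (p.2, p.1))}

def nu (Δ : Set (Fin n × Fin n)) (a b : Fin n) : ℕ :=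
  (nuSet Δ a b).ncard

lemma mem_nuSet_iff {a b : Fin n} {x y : Fin n} :
    (x,y) ∈ nuSet Δ a b ↔ ((x,y) ∈ Δ ∧ (Crosses (a,b) (x,y) ∨ Crosses (a,b) (y,x))) :=
  Iff.rfl

lemma nu_symm (a b : Fin n) : nu Δ a b = nu Δ b a := by
  have hset : nuSet Δ a b = nuSet Δ b a := by
    ext ⟨x,y⟩
    rw [mem_nuSet_iff, mem_nuSet_iff]
    constructor
    · rintro ⟨hm, hc | hc⟩
      · refine ⟨hm, Or.inr ?_⟩
        rw [crosses_iff a] at hc ⊢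
        simp only [CR, pos_self] at hc ⊢
        omega
      · refine ⟨hm, Or.inl ?_⟩
        rw [crosses_iff a] at hc ⊢
        simp only [CR, pos_self] at hc ⊢
        omega
    · rintro ⟨hm, hc | hc⟩
      · refine ⟨hm, Or.inr ?_⟩
        rw [crosses_iff a] at hc ⊢
        simp only [CR, pos_self] at hc ⊢
        omega
      · refine ⟨hm, Or.inl ?_⟩
        rw [crosses_iff a] at hc ⊢
        simp only [CR, pos_self] at hc ⊢
        omega
  unfold nu
  rw [hset]

lemma nu_mem_zero (hΔ : IsTriangulation Δ) {a b : Fin n} (h : (a,b) ∈ Δ) : nu Δ a b = 0 := by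
  unfold nu
  rw [Set.ncard_eq_zero (Set.toFinite _)]
  ext ⟨x,y⟩
  rw [mem_nuSet_iff]
  simp only [Set.mem_empty_iff_false, iff_false, not_and, not_or]
  intro hm
  exact ⟨no_cross hΔ h hm, no_cross hΔ h (swap_mem hΔ hm)⟩

lemma nu_pos (hΔ : IsTriangulation Δ) {a b : Fin n} (hab : a ≠ b) (hnot : (a,b) ∉ Δ) :
    0 < nu Δ a b := by
  rcases Nat.eq_zero_or_pos (nu Δ a b) with h0 | h0
  · exfalso
    unfold nu at h0
    rw [Set.ncard_eq_zero (Set.toFinite _)] at h0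
    refine hnot (mem_of_max hΔ (a,b) hab ?_ ?_)
    · rintro ⟨x,y⟩ hq
      have hq' : (x,y) ∉ nuSet Δ a b := by rw [h0]; exact Set.notMem_empty _
      rw [mem_nuSet_iff] at hq'
      simp only [not_and, not_or] at hq'
      obtain ⟨n1, n2⟩ := hq' hq
      refine ⟨n1, ?_⟩
      intro hc
      apply n2
      rw [crosses_iff a] at hc ⊢
      simp only [CR, pos_self] at hc ⊢
      omega
    · rw [crosses_iff a]; simp only [CR, pos_self]; omega
  · exact h0

lemma nu_lt (hΔ : IsTriangulation Δ) {i j u v : Fin n} (spec : FanSpec Δ i j u v) :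
    nu Δ v j < nu Δ i j := by
  obtain ⟨hu_mem, hv_mem, huv_mem, hu0, hu_lt, hv_gt, zone⟩ := spec
  apply Set.ncard_lt_ncard _ (Set.toFinite _)
  constructor
  · rintro ⟨x,y⟩ hmem
    rw [mem_nuSet_iff] at hmem ⊢
    obtain ⟨hm, hc⟩ := hmem
    refine ⟨hm, ?_⟩
    by_cases hx : x = i
    · exfalso
      have hz := zone y (hx ▸ hm)
      have hx0 : pos i x = 0 := by rw [hx, pos_self]
      rcases hc with hc | hc <;>
        · rw [crosses_iff i] at hc
          simp only [CR, pos_self] at hc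
          omega
    · by_cases hy : y = i
      · exfalso
        have hz := zone x (swap_mem hΔ (by
          have hmm : (x,y) ∈ Δ := hm
          rw [hy] at hmm
          exact hmm))
        have hy0 : pos i y = 0 := by rw [hy, pos_self]
        rcases hc with hc | hc <;>
          · rw [crosses_iff i] at hc
            simp only [CR, pos_self] at hc
            omega
      · have hx0 : 0 < pos i x := pos_pos hx
        have hy0 : 0 < pos i y := pos_pos hy
        have hm' : (y,x) ∈ Δ := swap_mem hΔ hm
        rcases hc with hc | hc
        · left
          have f1 := no_cross hΔ (p := (i,v)) (q := (y,x)) hv_mem hm'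
          rw [crosses_iff i] at f1 hc ⊢
          simp only [CR, pos_self] at f1 hc ⊢
          omega
        · right
          have f1 := no_cross hΔ (p := (i,v)) (q := (x,y)) hv_mem hm
          rw [crosses_iff i] at f1 hc ⊢
          simp only [CR, pos_self] at f1 hc ⊢
          omega
  · intro hsub
    have hw : (u,v) ∈ nuSet Δ i j := by
      rw [mem_nuSet_iff]
      refine ⟨huv_mem, Or.inl ?_⟩
      rw [crosses_iff i]
      simp only [CR, pos_self]
      omega
    have hw' := hsub hw
    rw [mem_nuSet_iff] at hw'
    obtain ⟨_, hc | hc⟩ := hw'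
    · rw [crosses_iff i] at hc; simp only [CR] at hc; omega
    · rw [crosses_iff i] at hc; simp only [CR] at hc; omega

/-! ### nestedness of the two fans of a missing chord -/

lemma fan_nested (hΔ : IsTriangulation Δ) {a b u v p q : Fin n}
    (hab : a ≠ b)
    (s1 : FanSpec Δ a b u v) (s2 : FanSpec Δ b a p q) :
    pos a b < pos a p ∧ pos a p ≤ pos a v ∧
    0 < pos a q ∧ pos a u ≤ pos a q ∧ pos a q < pos a b := by
  obtain ⟨hu_mem, hv_mem, huv_mem, hu0, hu_lt, hv_gt, zone1⟩ := s1
  obtain ⟨hp_mem, hq_mem, hpq_mem, hp0, hp_lt, hq_gt, zone2⟩ := s2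
  have hab0 : 0 < pos a b := pos_pos (Ne.symm hab)
  have sba := pos_shift_cases a b a
  have sbp := pos_shift_cases a b p
  have sbq := pos_shift_cases a b q
  have hplt := pos_lt a p
  have hqlt := pos_lt a q
  have hblt := pos_lt a b
  have hvlt := pos_lt a v
  rw [pos_self] at sba
  have hyp1 : pos a b < pos a p ∧ pos a p < n := by omega
  have hyp2 : 0 < pos a q ∧ pos a q < pos a b := by omega
  refine ⟨hyp1.1, ?_, hyp2.1, ?_, hyp2.2⟩
  · by_contra hcon
    have f2 := no_cross hΔ (p := (u,v)) (q := (b,p)) huv_mem hp_mem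
    rw [crosses_iff a] at f2
    simp only [CR] at f2
    omega
  · by_contra hcon
    have f1 := no_cross hΔ (p := (u,v)) (q := (b,q)) huv_mem hq_mem
    rw [crosses_iff a] at f1
    simp only [CR] at f1
    omega

lemma good_flip (hΔ : IsTriangulation Δ) {a b u v p q c : Fin n}
    (hab : a ≠ b)
    (s1 : FanSpec Δ a b u v) (s2 : FanSpec Δ b a p q)
    (hca : c ≠ a)
    (hbad : ¬(pos a u ≤ pos a c ∧ pos a c ≤ pos a v)) :
    pos b p ≤ pos b c ∧ pos b c ≤ pos b q := by
  have nest := fan_nested hΔ hab s1 s2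
  have hc0 : 0 < pos a c := pos_pos hca
  have sbc := pos_shift_cases a b c
  have sbp := pos_shift_cases a b p
  have sbq := pos_shift_cases a b q
  have hclt := pos_lt a c
  have hplt := pos_lt a p
  have hqlt := pos_lt a q
  have hblt := pos_lt a b
  have hvlt := pos_lt a v
  obtain ⟨_, _, _, _, hu_lt, hv_gt, _⟩ := s1
  omega



/-! ### triangle groups -/









lemma mk_tF {a b : Fin n} (h : (a,b) ∈ Δ) :
    PresentedGroup.mk (triRels Δ) (tF Δ a b) = tG Δ a b := by
  rw [tF, dif_pos h, tG, dif_pos h]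
  rfl

/-- the defining triangle relation in `TriGroup Δ` -/
lemma trel (hΔ : IsTriangulation Δ) {i j k : Fin n}
    (hij : i ≠ j) (hik : i ≠ k) (hjk : j ≠ k)
    (m1 : (i,j) ∈ Δ) (m2 : (i,k) ∈ Δ) (m3 : (j,k) ∈ Δ) :
    tG Δ i j * (tG Δ k j)⁻¹ * tG Δ k i = tG Δ i k * (tG Δ j k)⁻¹ * tG Δ j i := by
  have hr : (tF Δ i j * (tF Δ k j)⁻¹ * tF Δ k i *
      (tF Δ i k * (tF Δ j k)⁻¹ * tF Δ j i)⁻¹) ∈ triRels Δ :=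
    ⟨i, j, k, hij, hik, hjk, m1, swap_mem hΔ m1, m2, swap_mem hΔ m2, m3, swap_mem hΔ m3, rfl⟩
  have h1 : PresentedGroup.mk (triRels Δ)
      (tF Δ i j * (tF Δ k j)⁻¹ * tF Δ k i *
        (tF Δ i k * (tF Δ j k)⁻¹ * tF Δ j i)⁻¹) = 1 :=
    (QuotientGroup.eq_one_iff _).mpr (Subgroup.subset_normalClosure hr)
  simp only [map_mul, map_inv] at h1
  rw [mk_tF m1, mk_tF (swap_mem hΔ m1), mk_tF m2, mk_tF (swap_mem hΔ m2),
    mk_tF m3, mk_tF (swap_mem hΔ m3)] at h1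
  have h2 := mul_inv_eq_one.mp h1
  exact h2

/-! ### permutation lemmas for the triangle relation -/

section PermLemmas

variable {G : Type*} [Group G]

lemma srel_swap12 {sij skj ski sik sjk sji : G}
    (h : sij * skj⁻¹ * ski = sik * sjk⁻¹ * sji) :
    sji * ski⁻¹ * skj = sjk * sik⁻¹ * sij := by
  have h2 : sji = sjk * sik⁻¹ * (sij * skj⁻¹ * ski) := by
    rw [h]; group
  rw [h2]; group

end PermLemmas

/-! ### the fan choice function -/

def fanUV (Δ : Set (Fin n × Fin n)) (i j : Fin n) : Fin n × Fin n :=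
  if h : ∃ p : Fin n × Fin n, FanSpec Δ i j p.1 p.2 then h.choose else (i,i)

lemma fan_spec (hΔ : IsTriangulation Δ) (hn : 3 ≤ n) {i j : Fin n}
    (hij : i ≠ j) (hnot : (i,j) ∉ Δ) :
    FanSpec Δ i j (fanUV Δ i j).1 (fanUV Δ i j).2 := by
  obtain ⟨u, v, hs⟩ := fan_exists hΔ hn hij hnot
  have hex : ∃ p : Fin n × Fin n, FanSpec Δ i j p.1 p.2 := ⟨(u,v), hs⟩
  rw [fanUV, dif_pos hex]
  exact hex.choose_spec

lemma fanUV_eq (hΔ : IsTriangulation Δ) (hn : 3 ≤ n) {i j u v : Fin n}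
    (hij : i ≠ j) (hnot : (i,j) ∉ Δ) (hs : FanSpec Δ i j u v) :
    fanUV Δ i j = (u,v) := by
  have hspec := fan_spec hΔ hn hij hnot
  obtain ⟨h1, h2⟩ := fan_unique hspec hs
  exact Prod.ext h1 h2

/-! ### the retraction generators s -/

def sFuel (Δ : Set (Fin n × Fin n)) : ℕ → Fin n → Fin n → TriGroup Δ
  | 0, _, _ => 1
  | (f+1), i, j =>
    if (i,j) ∈ Δ then tG Δ i j
    else tG Δ i (fanUV Δ i j).1 * (tG Δ (fanUV Δ i j).2 (fanUV Δ i j).1)⁻¹ *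
         sFuel Δ f (fanUV Δ i j).2 j

def sG (Δ : Set (Fin n × Fin n)) (i j : Fin n) : TriGroup Δ :=
  sFuel Δ (nu Δ i j + 1) i j

lemma fan_snd_ne (hΔ : IsTriangulation Δ) (hn : 3 ≤ n) {i j : Fin n}
    (hij : i ≠ j) (hnot : (i,j) ∉ Δ) : (fanUV Δ i j).2 ≠ j := by
  have hs := fan_spec hΔ hn hij hnot
  intro h
  have h1 := hs.2.2.2.2.2.1
  rw [h] at h1
  omega

lemma sFuel_congr (hΔ : IsTriangulation Δ) (hn : 3 ≤ n) :
    ∀ N : ℕ, ∀ f g i j, i ≠ j → nu Δ i j ≤ N → nu Δ i j < f → nu Δ i j < g →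
      sFuel Δ f i j = sFuel Δ g i j := by
  intro N
  induction N with
  | zero =>
    intro f g i j hij hN hf hg
    by_cases hmem : (i,j) ∈ Δ
    · obtain ⟨f', rfl⟩ : ∃ f', f = f'+1 := ⟨f-1, by omega⟩
      obtain ⟨g', rfl⟩ : ∃ g', g = g'+1 := ⟨g-1, by omega⟩
      simp [sFuel, hmem]
    · exact absurd hN (by have := nu_pos hΔ hij hmem; omega)
  | succ N ih =>
    intro f g i j hij hN hf hg
    obtain ⟨f', rfl⟩ : ∃ f', f = f'+1 := ⟨f-1, by omega⟩
    obtain ⟨g', rfl⟩ : ∃ g', g = g'+1 := ⟨g-1, by omega⟩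
    by_cases hmem : (i,j) ∈ Δ
    · simp [sFuel, hmem]
    · have hs := fan_spec hΔ hn hij hmem
      have hdec : nu Δ (fanUV Δ i j).2 j < nu Δ i j := nu_lt hΔ hs
      have hvj : (fanUV Δ i j).2 ≠ j := fan_snd_ne hΔ hn hij hmem
      simp only [sFuel, if_neg hmem]
      rw [ih f' g' (fanUV Δ i j).2 j hvj (by omega) (by omega) (by omega)]

lemma s_mem {i j : Fin n} (h : (i,j) ∈ Δ) : sG Δ i j = tG Δ i j := by
  unfold sG
  simp [sFuel, h]

lemma s_unfold (hΔ : IsTriangulation Δ) (hn : 3 ≤ n) {i j : Fin n}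
    (hij : i ≠ j) (hnot : (i,j) ∉ Δ) :
    sG Δ i j = tG Δ i (fanUV Δ i j).1 * (tG Δ (fanUV Δ i j).2 (fanUV Δ i j).1)⁻¹ *
      sG Δ (fanUV Δ i j).2 j := by
  have hs := fan_spec hΔ hn hij hnot
  have hdec : nu Δ (fanUV Δ i j).2 j < nu Δ i j := nu_lt hΔ hs
  have hvj : (fanUV Δ i j).2 ≠ j := fan_snd_ne hΔ hn hij hnot
  unfold sG
  rw [show sFuel Δ (nu Δ i j + 1) i j =
      (if (i,j) ∈ Δ then tG Δ i j
       else tG Δ i (fanUV Δ i j).1 * (tG Δ (fanUV Δ i j).2 (fanUV Δ i j).1)⁻¹ *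
         sFuel Δ (nu Δ i j) (fanUV Δ i j).2 j) from rfl, if_neg hnot]
  rw [sFuel_congr hΔ hn (nu Δ (fanUV Δ i j).2 j) (nu Δ i j) (nu Δ (fanUV Δ i j).2 j + 1)
    (fanUV Δ i j).2 j hvj (le_refl _) (by omega) (by omega)]



/-! ### the mirror lemma: unfolding `s` from the far end -/

lemma mirror (hΔ : IsTriangulation Δ) (hn : 3 ≤ n) :
    ∀ N : ℕ, ∀ a b : Fin n, nu Δ a b ≤ N → a ≠ b → (a,b) ∉ Δ →
    sG Δ a b = sG Δ a (fanUV Δ b a).2 * (tG Δ (fanUV Δ b a).1 (fanUV Δ b a).2)⁻¹ *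
      tG Δ (fanUV Δ b a).1 b := by
  intro N
  induction N with
  | zero =>
    intro a b hN hab hnot
    exact absurd hN (by have := nu_pos hΔ hab hnot; omega)
  | succ N ih =>
    intro a b hN hab hnot
    have hnot' : (b,a) ∉ Δ := fun h => hnot (swap_mem hΔ h)
    obtain ⟨⟨u, v⟩, huv⟩ : ∃ p, fanUV Δ a b = p := ⟨_, rfl⟩
    obtain ⟨⟨p, q⟩, hpq⟩ : ∃ p, fanUV Δ b a = p := ⟨_, rfl⟩
    have spec1 : FanSpec Δ a b u v := by
      have h := fan_spec hΔ hn hab hnot; rw [huv] at h; exact h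
    have spec2 : FanSpec Δ b a p q := by
      have h := fan_spec hΔ hn (Ne.symm hab) hnot'; rw [hpq] at h; exact h
    have nest := fan_nested hΔ hab spec1 spec2
    obtain ⟨hau_mem, hav_mem, huv_mem, hu0, hub, hbv, zone1⟩ := spec1
    obtain ⟨hbp_mem, hbq_mem, hpq_mem, hbp0, hbpa, hbaq, zone2⟩ := spec2
    have hsab : sG Δ a b = tG Δ a u * (tG Δ v u)⁻¹ * sG Δ v b := by
      have h := s_unfold hΔ hn hab hnot; rw [huv] at h; exact h
    rw [hpq]
    show sG Δ a b = sG Δ a q * (tG Δ p q)⁻¹ * tG Δ p b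
    have hblt := pos_lt a b
    have hvlt := pos_lt a v
    have hqb : pos a q < pos a b := nest.2.2.2.2
    have hpb : pos a b < pos a p := nest.1
    have haq : a ≠ q := by
      intro h
      have : pos a q = 0 := by rw [← h, pos_self]
      omega
    by_cases hvp : v = p
    · subst hvp
      by_cases huq : u = q
      · subst huq
        rw [hsab, s_mem (swap_mem hΔ hbp_mem), s_mem hau_mem]
      · have hPuq : pos a u < pos a q := by
          rcases Nat.lt_or_ge (pos a u) (pos a q) with h | h
          · exact h
          · have : pos a u = pos a q := by omega
            exact absurd (pos_inj (a := a) this) huq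
        have hq_not : (a,q) ∉ Δ :=
          fan_not_mem ⟨hau_mem, hav_mem, huv_mem, hu0, hub, hbv, zone1⟩ hPuq (by omega)
        have hfanq : fanUV Δ a q = (u,v) :=
          fanUV_eq hΔ hn haq hq_not
            (fan_transfer ⟨hau_mem, hav_mem, huv_mem, hu0, hub, hbv, zone1⟩ hPuq (by omega))
        have hsaq : sG Δ a q = tG Δ a u * (tG Δ v u)⁻¹ * sG Δ v q := by
          have h := s_unfold hΔ hn haq hq_not; rw [hfanq] at h; exact h
        rw [hsab, hsaq, s_mem hpq_mem, s_mem (swap_mem hΔ hbp_mem)]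
        group
    · -- v ≠ p, so pos a p < pos a v
      have hPpv : pos a p < pos a v := by
        rcases Nat.lt_or_ge (pos a p) (pos a v) with h | h
        · exact h
        · have : pos a v = pos a p := by omega
          exact absurd (pos_inj (a := a) this) hvp
      have sba := pos_shift_cases a b a
      have sbv := pos_shift_cases a b v
      have sbp := pos_shift_cases a b p
      have sbq := pos_shift_cases a b q
      rw [pos_self] at sba
      have hab0 : 0 < pos a b := pos_pos (Ne.symm hab)
      have hqlt := pos_lt a q
      have hplt := pos_lt a p
      have hvb_not : (v,b) ∉ Δ := by
        intro h
        have hz := zone2 v (swap_mem hΔ h)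
        omega
      have hvb_ne : v ≠ b := by
        intro h
        rw [h] at hbv
        omega
      have hbv_ne : b ≠ v := Ne.symm hvb_ne
      have hbv_not : (b,v) ∉ Δ := fun h => hvb_not (swap_mem hΔ h)
      have specbv : FanSpec Δ b v p q :=
        ⟨hbp_mem, hbq_mem, hpq_mem, hbp0, by omega, by omega, zone2⟩
      have hfanbv : fanUV Δ b v = (p,q) := fanUV_eq hΔ hn hbv_ne hbv_not specbv
      have hdec : nu Δ v b < nu Δ a b :=
        nu_lt hΔ ⟨hau_mem, hav_mem, huv_mem, hu0, hub, hbv, zone1⟩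
      have hIH : sG Δ v b = sG Δ v q * (tG Δ p q)⁻¹ * tG Δ p b := by
        have h := ih v b (by omega) hvb_ne hvb_not
        rw [hfanbv] at h
        exact h
      by_cases huq : u = q
      · subst huq
        rw [hsab, hIH, s_mem (swap_mem hΔ huv_mem), s_mem hau_mem]
        group
      · have hPuq : pos a u < pos a q := by
          rcases Nat.lt_or_ge (pos a u) (pos a q) with h | h
          · exact h
          · have : pos a u = pos a q := by omega
            exact absurd (pos_inj (a := a) this) huq
        have hq_not : (a,q) ∉ Δ :=
          fan_not_mem ⟨hau_mem, hav_mem, huv_mem, hu0, hub, hbv, zone1⟩ hPuq (by omega)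
        have hfanq : fanUV Δ a q = (u,v) :=
          fanUV_eq hΔ hn haq hq_not
            (fan_transfer ⟨hau_mem, hav_mem, huv_mem, hu0, hub, hbv, zone1⟩ hPuq (by omega))
        have hsaq : sG Δ a q = tG Δ a u * (tG Δ v u)⁻¹ * sG Δ v q := by
          have h := s_unfold hΔ hn haq hq_not; rw [hfanq] at h; exact h
        rw [hsab, hIH, hsaq]
        group



/-! ### the spoke lemma -/

lemma spoke (hΔ : IsTriangulation Δ) (hn : 3 ≤ n) {i x : Fin n}
    (hix : i ≠ x) (hnot : (i,x) ∉ Δ) :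
    sG Δ x i = sG Δ x (fanUV Δ i x).2 * (tG Δ (fanUV Δ i x).1 (fanUV Δ i x).2)⁻¹ *
      tG Δ (fanUV Δ i x).1 i :=
  mirror hΔ hn (nu Δ x i) x i le_rfl (Ne.symm hix) (fun h => hnot (swap_mem hΔ h))

/-! ### the full family of triangle relations for `s` -/

def SRel (Δ : Set (Fin n × Fin n)) (i j k : Fin n) : Prop :=
  sG Δ i j * (sG Δ k j)⁻¹ * sG Δ k i = sG Δ i k * (sG Δ j k)⁻¹ * sG Δ j i

lemma srel_symm {i j k : Fin n} (h : SRel Δ i j k) : SRel Δ i k j := h.symm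

lemma srel_swap {i j k : Fin n} (h : SRel Δ i j k) : SRel Δ j i k :=
  srel_swap12 h

lemma srel_of_mem (hΔ : IsTriangulation Δ) {i j k : Fin n}
    (hij : i ≠ j) (hik : i ≠ k) (hjk : j ≠ k)
    (m1 : (i,j) ∈ Δ) (m2 : (i,k) ∈ Δ) (m3 : (j,k) ∈ Δ) : SRel Δ i j k := by
  unfold SRel
  rw [s_mem m1, s_mem m2, s_mem m3, s_mem (swap_mem hΔ m1), s_mem (swap_mem hΔ m2),
    s_mem (swap_mem hΔ m3)]
  exact trel hΔ hij hik hjk m1 m2 m3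

lemma gstep (hΔ : IsTriangulation Δ) (hn : 3 ≤ n) (N : ℕ)
    (ih : ∀ i' j' k' : Fin n, i' ≠ j' → i' ≠ k' → j' ≠ k' →
      nu Δ i' j' + nu Δ j' k' + nu Δ i' k' ≤ N → SRel Δ i' j' k')
    {i j k : Fin n} (hij : i ≠ j) (hik : i ≠ k) (hjk : j ≠ k)
    (hnot : (i,j) ∉ Δ)
    (hsum : nu Δ i j + nu Δ j k + nu Δ i k ≤ N + 1)
    (hgood : pos i (fanUV Δ i j).1 ≤ pos i k ∧ pos i k ≤ pos i (fanUV Δ i j).2) :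
    SRel Δ i j k := by
  obtain ⟨⟨u,v⟩, huv⟩ : ∃ p, fanUV Δ i j = p := ⟨_, rfl⟩
  have spec : FanSpec Δ i j u v := by
    have h := fan_spec hΔ hn hij hnot; rw [huv] at h; exact h
  rw [huv] at hgood
  obtain ⟨hg1, hg2⟩ := hgood
  obtain ⟨hiu, hiv, huv_mem, hu0, huj, hjv, zone⟩ := spec
  have hg1' : pos i u ≤ pos i k := hg1
  have hg2' : pos i k ≤ pos i v := hg2
  have hsij : sG Δ i j = tG Δ i u * (tG Δ v u)⁻¹ * sG Δ v j := by
    have h := s_unfold hΔ hn hij hnot; rw [huv] at h; exact h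
  have hspokej : sG Δ j i = sG Δ j v * (tG Δ u v)⁻¹ * tG Δ u i := by
    have h := spoke hΔ hn hij hnot; rw [huv] at h; exact h
  have hvj_ne : v ≠ j := by
    intro h; rw [h] at hjv; omega
  by_cases hkv : k = v
  · unfold SRel
    rw [hkv]
    rw [hsij, hspokej, s_mem (swap_mem hΔ hiv), s_mem hiv]
    have T := trel hΔ (mem_ne hΔ hiu) (mem_ne hΔ hiv) (mem_ne hΔ huv_mem) hiu hiv huv_mem
    trans (tG Δ i u * (tG Δ v u)⁻¹ * tG Δ v i)
    · group
    · rw [T]; group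
  · by_cases hku : k = u
    · have hjku : j ≠ u := by rw [← hku]; exact hjk
      have hjv_ne : j ≠ v := Ne.symm hvj_ne
      have huv_ne : u ≠ v := mem_ne hΔ huv_mem
      have hnuuv : nu Δ u v = 0 := nu_mem_zero hΔ huv_mem
      have hnujv : nu Δ j v < nu Δ i j := by
        have h := nu_lt hΔ (i := i) (j := j) ⟨hiu, hiv, huv_mem, hu0, huj, hjv, zone⟩
        rw [nu_symm (a := j) (b := v)]
        exact h
      have hnuiu : nu Δ i u = 0 := nu_mem_zero hΔ hiu
      have hsum' : nu Δ i j + nu Δ j u + nu Δ i u ≤ N + 1 := by rw [← hku]; exact hsum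
      have hIH : SRel Δ j u v := by
        refine ih j u v hjku hjv_ne huv_ne ?_
        omega
      unfold SRel
      rw [hku]
      rw [hsij, hspokej, s_mem hiu, s_mem (swap_mem hΔ hiu)]
      unfold SRel at hIH
      rw [s_mem (swap_mem hΔ huv_mem), s_mem huv_mem] at hIH
      -- hIH : sG j u * (tG v u)⁻¹ * sG v j = sG j v * (tG u v)⁻¹ * sG u j
      trans (tG Δ i u * ((sG Δ j u)⁻¹ * ((sG Δ j u * (tG Δ v u)⁻¹ * sG Δ v j) *
        ((sG Δ u j)⁻¹ * tG Δ u i))))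
      · group
      · rw [hIH]; group
    · have hkv' : pos i k < pos i v := by
        rcases Nat.lt_or_ge (pos i k) (pos i v) with h | h
        · exact h
        · exact absurd (pos_inj (a := i) (by omega)) hkv
      have hku' : pos i u < pos i k := by
        rcases Nat.lt_or_ge (pos i u) (pos i k) with h | h
        · exact h
        · exact absurd (pos_inj (a := i) (by omega)).symm hku
      have hik_not : (i,k) ∉ Δ :=
        fan_not_mem ⟨hiu, hiv, huv_mem, hu0, huj, hjv, zone⟩ hku' hkv'
      have hfanik : fanUV Δ i k = (u,v) :=
        fanUV_eq hΔ hn hik hik_not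
          (fan_transfer ⟨hiu, hiv, huv_mem, hu0, huj, hjv, zone⟩ hku' hkv')
      have hsik : sG Δ i k = tG Δ i u * (tG Δ v u)⁻¹ * sG Δ v k := by
        have h := s_unfold hΔ hn hik hik_not; rw [hfanik] at h; exact h
      have hspokek : sG Δ k i = sG Δ k v * (tG Δ u v)⁻¹ * tG Δ u i := by
        have h := spoke hΔ hn hik hik_not; rw [hfanik] at h; exact h
      have hvk_ne : v ≠ k := by
        intro h; rw [h] at hkv'; omega
      have hnuvj : nu Δ v j < nu Δ i j :=
        nu_lt hΔ ⟨hiu, hiv, huv_mem, hu0, huj, hjv, zone⟩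
      have hnuvk : nu Δ v k < nu Δ i k :=
        nu_lt hΔ (fan_transfer ⟨hiu, hiv, huv_mem, hu0, huj, hjv, zone⟩ hku' hkv')
      have hIH : SRel Δ v j k := by
        refine ih v j k hvj_ne hvk_ne hjk ?_
        have e1 : nu Δ v j = nu Δ v j := rfl
        have e2 : nu Δ v k = nu Δ k v := nu_symm _ _
        have e3 : nu Δ i k = nu Δ k i := nu_symm _ _
        omega
      unfold SRel
      rw [hsij, hsik, hspokej, hspokek]
      unfold SRel at hIH
      -- hIH : sG v j * (sG k j)⁻¹ * sG k v = sG v k * (sG j k)⁻¹ * sG j v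
      trans (tG Δ i u * (tG Δ v u)⁻¹ * ((sG Δ v j * (sG Δ k j)⁻¹ * sG Δ k v) *
        ((tG Δ u v)⁻¹ * tG Δ u i)))
      · group
      · rw [hIH]; group



lemma grel (hΔ : IsTriangulation Δ) (hn : 3 ≤ n) :
    ∀ N : ℕ, ∀ i j k : Fin n, i ≠ j → i ≠ k → j ≠ k →
      nu Δ i j + nu Δ j k + nu Δ i k ≤ N → SRel Δ i j k := by
  intro N
  induction N with
  | zero =>
    intro i j k hij hik hjk hsum
    have m1 : (i,j) ∈ Δ := by
      by_contra h; have := nu_pos hΔ hij h; omega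
    have m3 : (j,k) ∈ Δ := by
      by_contra h; have := nu_pos hΔ hjk h; omega
    have m2 : (i,k) ∈ Δ := by
      by_contra h; have := nu_pos hΔ hik h; omega
    exact srel_of_mem hΔ hij hik hjk m1 m2 m3
  | succ N ih =>
    intro i j k hij hik hjk hsum
    have main : ∀ a b c : Fin n, a ≠ b → a ≠ c → b ≠ c → (a,b) ∉ Δ →
        nu Δ a b + nu Δ b c + nu Δ a c ≤ N + 1 → SRel Δ a b c := by
      intro a b c hab hac hbc hnotab hsumabc
      by_cases hgood : pos a (fanUV Δ a b).1 ≤ pos a c ∧ pos a c ≤ pos a (fanUV Δ a b).2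
      · exact gstep hΔ hn N ih hab hac hbc hnotab hsumabc hgood
      · have hnotba : (b,a) ∉ Δ := fun h => hnotab (swap_mem hΔ h)
        have spec1 := fan_spec hΔ hn hab hnotab
        have spec2 := fan_spec hΔ hn (Ne.symm hab) hnotba
        have hflip := good_flip hΔ hab spec1 spec2 (Ne.symm hac) hgood
        have e1 := nu_symm (Δ := Δ) a b
        have e2 := nu_symm (Δ := Δ) b c
        have e3 := nu_symm (Δ := Δ) a c
        have h := gstep hΔ hn N ih (Ne.symm hab) hbc hac hnotba (by omega) hflip
        exact srel_swap h
    by_cases m1 : (i,j) ∈ Δ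
    · by_cases m3 : (j,k) ∈ Δ
      · by_cases m2 : (i,k) ∈ Δ
        · exact srel_of_mem hΔ hij hik hjk m1 m2 m3
        · have e1 := nu_symm (Δ := Δ) j k
          have h := main i k j hik hij (Ne.symm hjk) m2 (by omega)
          exact srel_symm h
      · have e1 := nu_symm (Δ := Δ) i k
        have e2 := nu_symm (Δ := Δ) i j
        have h1 := main j k i hjk (Ne.symm hij) (Ne.symm hik) m3 (by omega)
        exact srel_symm (srel_swap (srel_symm (srel_swap h1)))
    · exact main i j k hij hik hjk m1 hsum

/-- All triangle relations hold for the elements `sG` of the triangle group. -/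
lemma srel_all (hΔ : IsTriangulation Δ) (hn : 3 ≤ n) {i j k : Fin n}
    (hij : i ≠ j) (hik : i ≠ k) (hjk : j ≠ k) :
    sG Δ i j * (sG Δ k j)⁻¹ * sG Δ k i = sG Δ i k * (sG Δ j k)⁻¹ * sG Δ j i :=
  grel hΔ hn (nu Δ i j + nu Δ j k + nu Δ i k) i j k hij hik hjk le_rfl





/-! ### the big triangle group -/









lemma mk_btF {i j : Fin n} (h : i ≠ j) :
    PresentedGroup.mk (bigRels n) (btF i j) = bigT i j := by
  rw [btF, dif_pos h, bigT, dif_pos h]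
  rfl

lemma big_trel {i j k : Fin n} (hij : i ≠ j) (hik : i ≠ k) (hjk : j ≠ k) :
    bigT i j * (bigT (n := n) k j)⁻¹ * bigT k i *
      (bigT i k * (bigT j k)⁻¹ * bigT j i)⁻¹ = 1 := by
  have hr : (btF i j * (btF k j)⁻¹ * btF k i *
      (btF (n := n) i k * (btF j k)⁻¹ * btF j i)⁻¹) ∈ bigRels n :=
    ⟨i, j, k, hij, hik, hjk, rfl⟩
  have h1 : PresentedGroup.mk (bigRels n)
      (btF i j * (btF k j)⁻¹ * btF k i * (btF i k * (btF j k)⁻¹ * btF j i)⁻¹) = 1 :=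
    (QuotientGroup.eq_one_iff _).mpr (Subgroup.subset_normalClosure hr)
  simp only [map_mul, map_inv] at h1
  rw [mk_btF hij, mk_btF (Ne.symm hjk), mk_btF (Ne.symm hik), mk_btF hik, mk_btF hjk,
    mk_btF (Ne.symm hij)] at h1
  exact h1

/-! ### the two homomorphisms -/

def jhatFun (Δ : Set (Fin n × Fin n)) : ↥Δ → BigTriGroup n := fun d => bigT d.1.1 d.1.2

lemma jhat_rels (Δ : Set (Fin n × Fin n)) :
    ∀ r ∈ triRels Δ, FreeGroup.lift (jhatFun Δ) r = 1 := by
  rintro r ⟨i, j, k, hij, hik, hjk, m1, m2, m3, m4, m5, m6, rfl⟩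
  have l1 : ∀ (a b : Fin n) (h : (a,b) ∈ Δ),
      FreeGroup.lift (jhatFun Δ) (tF Δ a b) = bigT a b := by
    intro a b h
    rw [tF, dif_pos h]
    exact FreeGroup.lift_apply_of
  simp only [map_mul, map_inv]
  rw [l1 i j m1, l1 j i m2, l1 i k m3, l1 k i m4, l1 j k m5, l1 k j m6]
  exact big_trel hij hik hjk

def piFun (Δ : Set (Fin n × Fin n)) : OffD n → TriGroup Δ := fun d => sG Δ d.1.1 d.1.2

lemma pi_rels (hΔ : IsTriangulation Δ) (hn : 3 ≤ n) :
    ∀ r ∈ bigRels n, FreeGroup.lift (piFun Δ) r = 1 := by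
  rintro r ⟨i, j, k, hij, hik, hjk, rfl⟩
  have l1 : ∀ (a b : Fin n) (h : a ≠ b),
      FreeGroup.lift (piFun Δ) (btF a b) = sG Δ a b := by
    intro a b h
    rw [btF, dif_pos h]
    exact FreeGroup.lift_apply_of
  simp only [map_mul, map_inv]
  rw [l1 i j hij, l1 k j (Ne.symm hjk), l1 k i (Ne.symm hik), l1 i k hik, l1 j k hjk,
    l1 j i (Ne.symm hij)]
  exact mul_inv_eq_one.mpr (srel_all hΔ hn hij hik hjk)

/-- The assignments `t_{ij} ↦ t_{ij}` define a homomorphism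
`ĵ_Δ : 𝕋_Δ → 𝕋_n` which admits a surjective retraction `π_Δ : 𝕋_n → 𝕋_Δ`; in particular
`ĵ_Δ` is injective. -/
theorem triangle_group_embeds_in_big (n : ℕ) (hn : 3 ≤ n) (Δ : Set (Fin n × Fin n))
    (hΔ : IsTriangulation Δ) :
    ∃ jhat : TriGroup Δ →* BigTriGroup n,
      (∀ i j : Fin n, (i, j) ∈ Δ → jhat (tG Δ i j) = bigT i j) ∧
      (∃ π : BigTriGroup n →* TriGroup Δ,
        Function.Surjective π ∧ π.comp jhat = MonoidHom.id (TriGroup Δ)) ∧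
      Function.Injective jhat := by
  set jh : TriGroup Δ →* BigTriGroup n := PresentedGroup.toGroup (jhat_rels Δ) with hjh
  set pim : BigTriGroup n →* TriGroup Δ := PresentedGroup.toGroup (pi_rels hΔ hn) with hpim
  have hgen : ∀ i j : Fin n, (i, j) ∈ Δ → jh (tG Δ i j) = bigT i j := by
    intro i j h
    rw [tG, dif_pos h, hjh]
    exact PresentedGroup.toGroup.of _
  have hcomp : pim.comp jh = MonoidHom.id (TriGroup Δ) := by
    apply PresentedGroup.ext
    rintro ⟨⟨i, j⟩, hx⟩
    have hne : i ≠ j := mem_ne hΔ hx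
    simp only [MonoidHom.comp_apply, MonoidHom.id_apply]
    have e1 : PresentedGroup.of (rels := triRels Δ) ⟨(i,j), hx⟩ = tG Δ i j := by
      rw [tG, dif_pos hx]
    rw [e1, hgen i j hx, bigT, dif_pos hne, hpim]
    rw [show (PresentedGroup.toGroup (pi_rels hΔ hn))
        (PresentedGroup.of (rels := bigRels n) ⟨(i,j), hne⟩) = sG Δ i j from
      PresentedGroup.toGroup.of _]
    rw [s_mem hx, tG, dif_pos hx]
  refine ⟨jh, hgen, ⟨pim, ?_, hcomp⟩, ?_⟩
  · intro g
    exact ⟨jh g, by rw [← MonoidHom.comp_apply, hcomp, MonoidHom.id_apply]⟩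
  · intro x y h
    have h2 : pim (jh x) = pim (jh y) := by rw [h]
    rwa [← MonoidHom.comp_apply, ← MonoidHom.comp_apply, hcomp, MonoidHom.id_apply,
      MonoidHom.id_apply] at h2


end NCPolygon
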